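/- Let A₁ and A₂ be disjoint NO sets in G, and suppose A₂ is x̄_{A₁}-AO in G. Then for any pattern p, N(G*)p = 𝟏 if and only if N(G)p = 𝟏 or N(G)p = x̄_{A₁} or N(G)p = x̄_{A₂} or N(G)p = x̄_{A₁∪A₂}. Moreover, A₁ and A₂ are HO in G*, and ν(G*) = ν(G) + 2. -/

import Mathlib

open Matrix
open scoped Classical

/-- The closed neighborhood matrix of a simple graph over `ℤ₂`:
`N(G) u v = 1` iff `u = v` or `u` is adjacent to `v`. -/
noncomputable def nbhdMatrix {V : Type*} [Fintype V] (G : SimpleGraph V) :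
    Matrix V V (ZMod 2) :=
  Matrix.of fun u v => if u = v ∨ G.Adj u v then 1 else 0

/-- The nullity of a matrix over `ℤ₂`: the dimension of its kernel. -/
noncomputable def nullityM {V : Type*} [Fintype V] (M : Matrix V V (ZMod 2)) : ℕ :=
  Module.finrank (ZMod 2) (LinearMap.ker M.mulVecLin)

/-- The nullity `ν(G)` of a graph. -/
noncomputable def graphNullity {V : Type*} [Fintype V] (G : SimpleGraph V) : ℕ :=
  nullityM (nbhdMatrix G)

/-- Characteristic vector of a set of vertices. -/
noncomputable def chi {V : Type*} (A : Set V) : V → ZMod 2 :=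
  fun v => if v ∈ A then 1 else 0

/-- A configuration `c` is solvable (w.r.t. the matrix `M`) if `M p = c` for some pattern `p`. -/
def Solv {V : Type*} [Fintype V] (M : Matrix V V (ZMod 2)) (c : V → ZMod 2) : Prop :=
  ∃ p : V → ZMod 2, M.mulVec p = c

/-- `A` is `c`-always odd activated: `A` is solvable and `x_A · p = 1` for every solving
pattern `p` for `c`. -/
def cAO {V : Type*} [Fintype V] (M : Matrix V V (ZMod 2)) (c : V → ZMod 2)
    (A : Set V) : Prop :=
  Solv M (chi A) ∧ ∀ p : V → ZMod 2, M.mulVec p = c → chi A ⬝ᵥ p = 1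

/-- `A` is `c`-never odd activated: `A` is solvable and `x_A · p = 0` for every solving
pattern `p` for `c`. -/
def cNO {V : Type*} [Fintype V] (M : Matrix V V (ZMod 2)) (c : V → ZMod 2)
    (A : Set V) : Prop :=
  Solv M (chi A) ∧ ∀ p : V → ZMod 2, M.mulVec p = c → chi A ⬝ᵥ p = 0

/-- `A` is always odd activated (AO): `𝟏`-always odd activated. -/
def AO {V : Type*} [Fintype V] (M : Matrix V V (ZMod 2)) (A : Set V) : Prop :=
  cAO M 1 A

/-- `A` is never odd activated (NO): `𝟏`-never odd activated. -/
def NO {V : Type*} [Fintype V] (M : Matrix V V (ZMod 2)) (A : Set V) : Prop :=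
  cNO M 1 A

/-- `A` is half odd activated (HO): `x_A` is not solvable. -/
def HO {V : Type*} [Fintype V] (M : Matrix V V (ZMod 2)) (A : Set V) : Prop :=
  ¬ Solv M (chi A)

/-- The closed neighborhood matrix of the graph `G*` obtained from `G` by toggling every
pair of vertices between the disjoint sets `A₁` and `A₂`:
`N(G*) = N(G) + x_{A₁} x_{A₂}ᵗ + x_{A₂} x_{A₁}ᵗ` over `ℤ₂`. -/
noncomputable def starMatrix {V : Type*} [Fintype V] (G : SimpleGraph V)
    (A₁ A₂ : Set V) : Matrix V V (ZMod 2) :=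
  nbhdMatrix G + Matrix.vecMulVec (chi A₁) (chi A₂) + Matrix.vecMulVec (chi A₂) (chi A₁)

private lemma nbhdT {V : Type*} [Fintype V] (G : SimpleGraph V) :
    (nbhdMatrix G)ᵀ = nbhdMatrix G := by
  ext u v
  simp only [Matrix.transpose_apply, nbhdMatrix, Matrix.of_apply]
  have h : (v = u ∨ G.Adj v u) ↔ (u = v ∨ G.Adj u v) := by rw [eq_comm, G.adj_comm]
  exact if_congr h rfl rfl

private lemma nbhd_symm {V : Type*} [Fintype V] (G : SimpleGraph V) (u v : V) :
    nbhdMatrix G u v = nbhdMatrix G v u := by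
  conv_lhs => rw [← nbhdT G]
  rfl

private lemma dms {V : Type*} [Fintype V] (G : SimpleGraph V) (x y : V → ZMod 2) :
    x ⬝ᵥ ((nbhdMatrix G).mulVec y) = y ⬝ᵥ ((nbhdMatrix G).mulVec x) := by
  rw [Matrix.dotProduct_mulVec, ← Matrix.mulVec_transpose, nbhdT, dotProduct_comm]

private lemma quadForm {V : Type*} [Fintype V] (G : SimpleGraph V) (x : V → ZMod 2) :
    x ⬝ᵥ ((nbhdMatrix G).mulVec x) = x ⬝ᵥ (1 : V → ZMod 2) := by
  classical
  set g : V × V → ZMod 2 := fun p => x p.1 * nbhdMatrix G p.1 p.2 * x p.2 with hg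
  set h : V × V → ZMod 2 := fun p => if p.1 = p.2 then g p else 0 with hh
  have key : x ⬝ᵥ ((nbhdMatrix G).mulVec x) = ∑ p ∈ Finset.univ ×ˢ Finset.univ, g p := by
    rw [Finset.sum_product]
    simp only [Matrix.mulVec, dotProduct, hg]
    refine Finset.sum_congr rfl fun u _ => ?_
    rw [Finset.mul_sum]
    exact Finset.sum_congr rfl fun v _ => (mul_assoc _ _ _).symm
  have hdiagval : ∀ u : V, g (u, u) = x u := by
    intro u
    have h1 : nbhdMatrix G u u = 1 := by simp [nbhdMatrix]
    simp only [hg, h1]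
    exact (by decide : ∀ a : ZMod 2, a * 1 * a = a) _
  have hsum_h : ∑ p ∈ Finset.univ ×ˢ Finset.univ, h p = ∑ u, x u := by
    rw [Finset.sum_product]
    refine Finset.sum_congr rfl fun u _ => ?_
    simp only [hh]
    rw [Finset.sum_ite_eq]
    simp [hdiagval]
  have hzero : ∑ p ∈ Finset.univ ×ˢ Finset.univ, (g p + h p) = 0 := by
    refine Finset.sum_ninvolution (fun p => (p.2, p.1)) ?_ ?_
      (fun p => Finset.mem_product.mpr ⟨Finset.mem_univ _, Finset.mem_univ _⟩)
      (fun p => rfl)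
    · intro p
      have e : g (p.2, p.1) = g p := by
        simp only [hg]
        rw [nbhd_symm G p.2 p.1]
        ring
      have e2 : h (p.2, p.1) = h p := by
        by_cases hc : p.1 = p.2
        · simp only [hh, if_pos hc, if_pos hc.symm, e]
        · simp only [hh, if_neg hc, if_neg (Ne.symm hc)]
      rw [e, e2]
      exact (by decide : ∀ a : ZMod 2, a + a = 0) _
    · intro p hne hc
      apply hne
      have hp12 : p.1 = p.2 := (congrArg Prod.snd hc)
      simp only [hh, if_pos hp12]
      exact (by decide : ∀ a : ZMod 2, a + a = 0) _
  rw [Finset.sum_add_distrib] at hzero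
  have hgh : ∑ p ∈ Finset.univ ×ˢ Finset.univ, g p = ∑ p ∈ Finset.univ ×ˢ Finset.univ, h p :=
    (by decide : ∀ a b : ZMod 2, a + b = 0 → a = b) _ _ hzero
  rw [key, hgh, hsum_h]
  simp [dotProduct]

private lemma edot {V : Type*} [Fintype V] (u : V) (w : V → ZMod 2) :
    (fun j => if u = j then (1 : ZMod 2) else 0) ⬝ᵥ w = w u := by
  classical
  simp only [dotProduct, ite_mul, one_mul, zero_mul, Finset.sum_ite_eq,
    Finset.mem_univ, if_true]

private lemma sutner {V : Type*} [Fintype V] (G : SimpleGraph V) :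
    ∃ p : V → ZMod 2, (nbhdMatrix G).mulVec p = 1 := by
  classical
  by_contra hcon
  push_neg at hcon
  have h1 : (1 : V → ZMod 2) ∉ LinearMap.range (nbhdMatrix G).mulVecLin := by
    rintro ⟨p, hp⟩
    exact hcon p (by rwa [Matrix.mulVecLin_apply] at hp)
  obtain ⟨f, hf0, hfmap⟩ := Submodule.exists_dual_map_eq_bot_of_notMem h1 inferInstance
  have hfz : ∀ z : V → ZMod 2, f ((nbhdMatrix G).mulVec z) = 0 := by
    intro z
    have hm : f ((nbhdMatrix G).mulVec z) ∈
        (LinearMap.range (nbhdMatrix G).mulVecLin).map f := by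
      refine Submodule.mem_map_of_mem ?_
      exact ⟨z, by rw [Matrix.mulVecLin_apply]⟩
    rw [hfmap] at hm
    exact (Submodule.mem_bot (ZMod 2)).mp hm
  set y : V → ZMod 2 := fun v => f (fun j => if v = j then 1 else 0) with hy
  have hrep : ∀ z : V → ZMod 2, f z = z ⬝ᵥ y := by
    intro z
    conv_lhs => rw [pi_eq_sum_univ z]
    rw [map_sum]
    simp only [_root_.map_smul, smul_eq_mul]
    rfl
  have hMy : (nbhdMatrix G).mulVec y = 0 := by
    funext u
    have h0 := hfz (fun j => if u = j then 1 else 0)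
    rw [hrep] at h0
    rw [dotProduct_comm, dms, edot] at h0
    exact h0
  have hf1 : f 1 = 0 := by
    rw [hrep, dotProduct_comm, ← quadForm G y, hMy, dotProduct_zero]
  exact hf0 hf1

private lemma vecMulVec_mulVec' {V : Type*} [Fintype V] (a b p : V → ZMod 2) :
    (Matrix.vecMulVec a b).mulVec p = (b ⬝ᵥ p) • a := by
  funext u
  simp only [Matrix.mulVec, Matrix.vecMulVec_apply, dotProduct, Pi.smul_apply,
    smul_eq_mul]
  rw [Finset.sum_congr rfl fun v _ => mul_assoc (a u) (b v) (p v), ← Finset.mul_sum,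
    mul_comm]

private lemma chi_union {V : Type*} (A₁ A₂ : Set V) (hd : Disjoint A₁ A₂) :
    chi (A₁ ∪ A₂) = chi A₁ + chi A₂ := by
  classical
  funext v
  by_cases h1 : v ∈ A₁
  · have h2 : v ∉ A₂ := fun h2 => Set.disjoint_left.mp hd h1 h2
    simp [chi, h1, h2]
  · by_cases h2 : v ∈ A₂ <;> simp [chi, h1, h2]

private def Lmap {V : Type*} [Fintype V] (a b : V → ZMod 2) :
    (V → ZMod 2) →ₗ[ZMod 2] (ZMod 2) × (ZMod 2) where
  toFun x := (a ⬝ᵥ x, b ⬝ᵥ x)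
  map_add' x y := by simp [dotProduct_add, Prod.ext_iff]
  map_smul' c x := by simp [dotProduct_smul, Prod.ext_iff]

private lemma Lmap_apply {V : Type*} [Fintype V] (a b x : V → ZMod 2) :
    Lmap a b x = (a ⬝ᵥ x, b ⬝ᵥ x) := rfl

private lemma star_apply {V : Type*} [Fintype V] (G : SimpleGraph V) (A₁ A₂ : Set V)
    (p : V → ZMod 2) :
    (starMatrix G A₁ A₂).mulVec p =
      (nbhdMatrix G).mulVec p + (chi A₂ ⬝ᵥ p) • chi A₁ + (chi A₁ ⬝ᵥ p) • chi A₂ := by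
  unfold starMatrix
  rw [Matrix.add_mulVec, Matrix.add_mulVec, vecMulVec_mulVec', vecMulVec_mulVec']

/-- Proposition (NO, NO, `x̄_{A₁}`-AO): the odd dominating patterns of `G*` are exactly
the solving patterns of `𝟏`, `x̄_{A₁}`, `x̄_{A₂}`, `x̄_{A₁∪A₂}` in `G`; `A₁`, `A₂` become
HO in `G*`, and `ν(G*) = ν(G) + 2`. -/
theorem stmt11 {V : Type*} [Fintype V] (G : SimpleGraph V) (A₁ A₂ : Set V)
    (hd : Disjoint A₁ A₂)
    (h1 : NO (nbhdMatrix G) A₁) (h2 : NO (nbhdMatrix G) A₂)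
    (h3 : cAO (nbhdMatrix G) (chi A₁ + 1) A₂) :
    (∀ p : V → ZMod 2, (starMatrix G A₁ A₂).mulVec p = 1 ↔
      ((nbhdMatrix G).mulVec p = 1 ∨ (nbhdMatrix G).mulVec p = chi A₁ + 1 ∨
       (nbhdMatrix G).mulVec p = chi A₂ + 1 ∨
       (nbhdMatrix G).mulVec p = chi (A₁ ∪ A₂) + 1)) ∧
    HO (starMatrix G A₁ A₂) A₁ ∧ HO (starMatrix G A₁ A₂) A₂ ∧
    nullityM (starMatrix G A₁ A₂) = nullityM (nbhdMatrix G) + 2 := by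
  classical
  unfold NO cNO at h1 h2
  unfold cAO at h3
  obtain ⟨⟨q₁, hq₁⟩, ha⟩ := h1
  obtain ⟨⟨q₂, hq₂⟩, hb⟩ := h2
  obtain ⟨-, hc⟩ := h3
  obtain ⟨p₀, hp₀⟩ := sutner G
  have aput : ∀ p : V → ZMod 2, chi A₁ ⬝ᵥ p = q₁ ⬝ᵥ ((nbhdMatrix G).mulVec p) := by
    intro p
    rw [← hq₁, dotProduct_comm]
    exact dms G p q₁
  have bput : ∀ p : V → ZMod 2, chi A₂ ⬝ᵥ p = q₂ ⬝ᵥ ((nbhdMatrix G).mulVec p) := by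
    intro p
    rw [← hq₂, dotProduct_comm]
    exact dms G p q₂
  have d1 : q₁ ⬝ᵥ (1 : V → ZMod 2) = 0 := by
    have h := ha p₀ hp₀
    rwa [aput p₀, hp₀] at h
  have d2 : q₂ ⬝ᵥ (1 : V → ZMod 2) = 0 := by
    have h := hb p₀ hp₀
    rwa [bput p₀, hp₀] at h
  have d3 : q₁ ⬝ᵥ chi A₁ = 0 := by rw [← hq₁, quadForm G q₁]; exact d1
  have d4 : q₂ ⬝ᵥ chi A₂ = 0 := by rw [← hq₂, quadForm G q₂]; exact d2
  have d5 : chi A₂ ⬝ᵥ q₁ = 1 := by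
    have hMsum : (nbhdMatrix G).mulVec (p₀ + q₁) = chi A₁ + 1 := by
      rw [Matrix.mulVec_add, hp₀, hq₁, add_comm]
    have h := hc (p₀ + q₁) hMsum
    rw [dotProduct_add] at h
    rwa [hb p₀ hp₀, zero_add] at h
  have d5' : q₁ ⬝ᵥ chi A₂ = 1 := by rw [dotProduct_comm]; exact d5
  have d6 : q₂ ⬝ᵥ chi A₁ = 1 := by
    rw [← hq₁, dms G q₂ q₁, hq₂]
    exact d5'
  have d3' : chi A₁ ⬝ᵥ q₁ = 0 := by rw [dotProduct_comm]; exact d3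
  have d6' : chi A₁ ⬝ᵥ q₂ = 1 := by rw [dotProduct_comm]; exact d6
  have d4' : chi A₂ ⬝ᵥ q₂ = 0 := by rw [dotProduct_comm]; exact d4
  have hstar := star_apply G A₁ A₂
  have z2 : ∀ x : ZMod 2, x = 0 ∨ x = 1 := by decide
  have cancel : ∀ u y z : V → ZMod 2, (u + y + z) + y + z = u := by
    intro u y z
    funext v
    simp only [Pi.add_apply]
    exact (by decide : ∀ x y z : ZMod 2, x + y + z + y + z = x) _ _ _
  have part1 : ∀ p : V → ZMod 2, (starMatrix G A₁ A₂).mulVec p = 1 ↔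
      ((nbhdMatrix G).mulVec p = 1 ∨ (nbhdMatrix G).mulVec p = chi A₁ + 1 ∨
       (nbhdMatrix G).mulVec p = chi A₂ + 1 ∨
       (nbhdMatrix G).mulVec p = chi (A₁ ∪ A₂) + 1) := by
    intro p
    constructor
    · intro h
      have h' := hstar p
      rw [h] at h'
      have hMp : (nbhdMatrix G).mulVec p =
          1 + (chi A₂ ⬝ᵥ p) • chi A₁ + (chi A₁ ⬝ᵥ p) • chi A₂ := by
        rw [h']; exact (cancel _ _ _).symm
      rcases z2 (chi A₂ ⬝ᵥ p) with hα | hα <;> rcases z2 (chi A₁ ⬝ᵥ p) with hβ | hβ <;>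
          rw [hα, hβ] at hMp <;>
          simp only [zero_smul, one_smul, add_zero, zero_add] at hMp
      · exact Or.inl hMp
      · refine Or.inr (Or.inr (Or.inl ?_))
        rwa [add_comm] at hMp
      · refine Or.inr (Or.inl ?_)
        rwa [add_comm] at hMp
      · refine Or.inr (Or.inr (Or.inr ?_))
        rw [chi_union A₁ A₂ hd, hMp]
        abel
    · rintro (h | h | h | h)
      · rw [hstar p, h, ha p h, hb p h]
        simp
      · have hα : chi A₂ ⬝ᵥ p = 1 := hc p h
        have hβ : chi A₁ ⬝ᵥ p = 0 := by
          rw [aput p, h, dotProduct_add, d3, d1, add_zero]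
        rw [hstar p, h, hα, hβ]
        funext v
        simp only [Pi.add_apply, Pi.one_apply, Pi.smul_apply, smul_eq_mul]
        exact (by decide : ∀ x y : ZMod 2, (x + 1) + 1 * x + 0 * y = 1) _ _
      · have hβ : chi A₁ ⬝ᵥ p = 1 := by
          rw [aput p, h, dotProduct_add, d5', d1, add_zero]
        have hα : chi A₂ ⬝ᵥ p = 0 := by
          rw [bput p, h, dotProduct_add, d4, d2, add_zero]
        rw [hstar p, h, hα, hβ]
        funext v
        simp only [Pi.add_apply, Pi.one_apply, Pi.smul_apply, smul_eq_mul]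
        exact (by decide : ∀ x y : ZMod 2, (y + 1) + 0 * x + 1 * y = 1) _ _
      · rw [chi_union A₁ A₂ hd] at h
        have hβ : chi A₁ ⬝ᵥ p = 1 := by
          rw [aput p, h, dotProduct_add, dotProduct_add, d3, d5', d1]
          norm_num
        have hα : chi A₂ ⬝ᵥ p = 1 := by
          rw [bput p, h, dotProduct_add, dotProduct_add, d6, d4, d2]
          norm_num
        rw [hstar p, h, hα, hβ]
        funext v
        simp only [Pi.add_apply, Pi.one_apply, Pi.smul_apply, smul_eq_mul]
        exact (by decide : ∀ x y : ZMod 2, (x + y + 1) + 1 * x + 1 * y = 1) _ _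
  have hHO1 : HO (starMatrix G A₁ A₂) A₁ := by
    rintro ⟨p, hp⟩
    have h' := hstar p
    rw [hp] at h'
    have hMp : (nbhdMatrix G).mulVec p =
        chi A₁ + (chi A₂ ⬝ᵥ p) • chi A₁ + (chi A₁ ⬝ᵥ p) • chi A₂ := by
      calc (nbhdMatrix G).mulVec p
          = ((nbhdMatrix G).mulVec p + (chi A₂ ⬝ᵥ p) • chi A₁ + (chi A₁ ⬝ᵥ p) • chi A₂)
            + (chi A₂ ⬝ᵥ p) • chi A₁ + (chi A₁ ⬝ᵥ p) • chi A₂ := (cancel _ _ _).symm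
        _ = chi A₁ + (chi A₂ ⬝ᵥ p) • chi A₁ + (chi A₁ ⬝ᵥ p) • chi A₂ := by rw [← h']
    have hcontra : chi A₂ ⬝ᵥ p = 1 + chi A₂ ⬝ᵥ p := by
      conv_lhs => rw [bput p, hMp]
      rw [dotProduct_add, dotProduct_add, dotProduct_smul,
        dotProduct_smul, d6, d4, smul_eq_mul, smul_eq_mul, mul_one, mul_zero,
        add_zero]
    rcases z2 (chi A₂ ⬝ᵥ p) with hx | hx <;> rw [hx] at hcontra <;>
      exact absurd hcontra (by decide)
  have hHO2 : HO (starMatrix G A₁ A₂) A₂ := by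
    rintro ⟨p, hp⟩
    have h' := hstar p
    rw [hp] at h'
    have hMp : (nbhdMatrix G).mulVec p =
        chi A₂ + (chi A₂ ⬝ᵥ p) • chi A₁ + (chi A₁ ⬝ᵥ p) • chi A₂ := by
      calc (nbhdMatrix G).mulVec p
          = ((nbhdMatrix G).mulVec p + (chi A₂ ⬝ᵥ p) • chi A₁ + (chi A₁ ⬝ᵥ p) • chi A₂)
            + (chi A₂ ⬝ᵥ p) • chi A₁ + (chi A₁ ⬝ᵥ p) • chi A₂ := (cancel _ _ _).symm
        _ = chi A₂ + (chi A₂ ⬝ᵥ p) • chi A₁ + (chi A₁ ⬝ᵥ p) • chi A₂ := by rw [← h']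
    have hcontra : chi A₁ ⬝ᵥ p = 1 + chi A₁ ⬝ᵥ p := by
      conv_lhs => rw [aput p, hMp]
      rw [dotProduct_add, dotProduct_add, dotProduct_smul,
        dotProduct_smul, d5', d3, smul_eq_mul, smul_eq_mul, mul_zero, add_zero,
        mul_one]
    rcases z2 (chi A₁ ⬝ᵥ p) with hx | hx <;> rw [hx] at hcontra <;>
      exact absurd hcontra (by decide)
  refine ⟨part1, hHO1, hHO2, ?_⟩
  -- nullity part
  have hKle : LinearMap.ker (nbhdMatrix G).mulVecLin ≤
      LinearMap.ker (starMatrix G A₁ A₂).mulVecLin := by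
    intro x hx
    rw [LinearMap.mem_ker, Matrix.mulVecLin_apply] at hx ⊢
    have hax : chi A₁ ⬝ᵥ x = 0 := by rw [aput x, hx, dotProduct_zero]
    have hbx : chi A₂ ⬝ᵥ x = 0 := by rw [bput x, hx, dotProduct_zero]
    rw [hstar x, hx, hax, hbx]
    simp
  have hq₁K : q₁ ∈ LinearMap.ker (starMatrix G A₁ A₂).mulVecLin := by
    rw [LinearMap.mem_ker, Matrix.mulVecLin_apply, hstar q₁, hq₁, d5, d3']
    funext v
    simp only [Pi.add_apply, Pi.smul_apply, smul_eq_mul, Pi.zero_apply]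
    exact (by decide : ∀ x y : ZMod 2, x + 1 * x + 0 * y = 0) _ _
  have hq₂K : q₂ ∈ LinearMap.ker (starMatrix G A₁ A₂).mulVecLin := by
    rw [LinearMap.mem_ker, Matrix.mulVecLin_apply, hstar q₂, hq₂, d4', d6']
    funext v
    simp only [Pi.add_apply, Pi.smul_apply, smul_eq_mul, Pi.zero_apply]
    exact (by decide : ∀ x y : ZMod 2, y + 0 * x + 1 * y = 0) _ _
  set L' := (Lmap (chi A₁) (chi A₂)).domRestrict
    (LinearMap.ker (starMatrix G A₁ A₂).mulVecLin) with hL'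
  have hrange : LinearMap.range L' = ⊤ := by
    rw [eq_top_iff]
    rintro ⟨x, y⟩ -
    have m1 : ((0 : ZMod 2), (1 : ZMod 2)) ∈ LinearMap.range L' :=
      ⟨⟨q₁, hq₁K⟩, by rw [hL', LinearMap.domRestrict_apply, Lmap_apply, d3', d5]⟩
    have m2 : ((1 : ZMod 2), (0 : ZMod 2)) ∈ LinearMap.range L' :=
      ⟨⟨q₂, hq₂K⟩, by rw [hL', LinearMap.domRestrict_apply, Lmap_apply, d6', d4']⟩
    have hxy : ((x, y) : ZMod 2 × ZMod 2) =
        x • ((1 : ZMod 2), (0 : ZMod 2)) + y • ((0 : ZMod 2), (1 : ZMod 2)) := by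
      simp [Prod.ext_iff]
    rw [hxy]
    exact Submodule.add_mem _ (Submodule.smul_mem _ x m2) (Submodule.smul_mem _ y m1)
  have hker : LinearMap.ker L' =
      (LinearMap.ker (nbhdMatrix G).mulVecLin).comap
        (LinearMap.ker (starMatrix G A₁ A₂).mulVecLin).subtype := by
    ext ⟨x, hx⟩
    constructor
    · intro hLx
      rw [LinearMap.mem_ker, hL', LinearMap.domRestrict_apply, Lmap_apply] at hLx
      have hax : chi A₁ ⬝ᵥ x = 0 := congrArg Prod.fst hLx
      have hbx : chi A₂ ⬝ᵥ x = 0 := congrArg Prod.snd hLx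
      have hSx : (starMatrix G A₁ A₂).mulVec x = 0 := by
        have h := hx
        rwa [LinearMap.mem_ker, Matrix.mulVecLin_apply] at h
      have h' := hstar x
      rw [hSx, hax, hbx] at h'
      simp only [zero_smul, add_zero] at h'
      simp only [Submodule.mem_comap, Submodule.coe_subtype, LinearMap.mem_ker,
        Matrix.mulVecLin_apply]
      exact h'.symm
    · intro hmem
      have hMx : (nbhdMatrix G).mulVec x = 0 := by
        simpa [Matrix.mulVecLin_apply] using hmem
      have hax : chi A₁ ⬝ᵥ x = 0 := by rw [aput x, hMx, dotProduct_zero]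
      have hbx : chi A₂ ⬝ᵥ x = 0 := by rw [bput x, hMx, dotProduct_zero]
      rw [LinearMap.mem_ker, hL', LinearMap.domRestrict_apply, Lmap_apply, hax, hbx]
      rfl
  have hrn := LinearMap.finrank_range_add_finrank_ker L'
  rw [hrange, finrank_top] at hrn
  have h2' : Module.finrank (ZMod 2) (ZMod 2 × ZMod 2) = 2 := by
    simp [Module.finrank_prod]
  rw [h2'] at hrn
  have hkerrank : Module.finrank (ZMod 2) (LinearMap.ker L') =
      nullityM (nbhdMatrix G) := by
    rw [hker]
    exact LinearEquiv.finrank_eq (Submodule.comapSubtypeEquivOfLe hKle)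
  unfold nullityM at *
  omega
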